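/- arXiv:2508.05706 — 3 statements merged into one kernel-verified Lean document; each statement's English description precedes it below -/
import Mathlib

section
/- (No strict local optima for R2R hill climbing) In a Gaussian linear SEM whose error variances are weakly increasing in the true ordering σ* and which satisfies Var(X_{σ*(i)} | X_{σ*(1)},...,X_{σ*(i-1)}) ≤ Var(X_{σ*(j)} | all other variables) for all i < j, every permutation σ not consistent with the true DAG admits an R2R move τ = R2R(σ, i, j) with ∑_k ω_k^τ ≤ ∑_k ω_k^σ. -/
open Matrix BigOperators

/-- Conditional variance of coordinate `j` of a centered Gaussian vector with covariance `S`,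
given the coordinates in the index set `A`, i.e. the Schur complement
`S j j - S_{jA} (S_{AA})⁻¹ S_{Aj}`. -/
noncomputable def condVar {p : ℕ} (S : Matrix (Fin p) (Fin p) ℝ) (j : Fin p)
    (A : Finset (Fin p)) : ℝ :=
  S j j - ∑ s : A, ∑ t : A,
    S j s.1 * (Matrix.of fun a b : A => S a.1 b.1)⁻¹ s t * S t.1 j

/-- The set of predecessors of node `j` under the ordering `σ`. -/
def PRED {p : ℕ} (σ : Equiv.Perm (Fin p)) (j : Fin p) : Finset (Fin p) :=
  Finset.univ.filter fun i => σ.symm i < σ.symm j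

/-- `σ` is consistent with the DAG encoded by the weighted adjacency matrix `B`:
every edge `i → j` (i.e. `B i j ≠ 0`) goes forward in the ordering `σ`. -/
def Consistent {p : ℕ} (B : Matrix (Fin p) (Fin p) ℝ) (σ : Equiv.Perm (Fin p)) : Prop :=
  ∀ i j, B i j ≠ 0 → σ.symm i < σ.symm j

/-- The covariance matrix `Σ = (I - Bᵀ)⁻¹ Ω (I - B)⁻¹` of the Gaussian linear SEM
`X = Bᵀ X + ε`, `ε ~ N(0, Ω)` with `Ω = diag ω`. -/
noncomputable def modelCov {p : ℕ} (B : Matrix (Fin p) (Fin p) ℝ) (ω : Fin p → ℝ) :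
    Matrix (Fin p) (Fin p) ℝ :=
  (1 - B.transpose)⁻¹ * Matrix.diagonal ω * (1 - B)⁻¹

/-- The random-to-random move `R2R(σ, i, j)` (for `i < j`): the element at position `j`
is inserted at position `i`, and the elements at positions `i, …, j-1` are shifted one
step to the right. -/
noncomputable def R2R {p : ℕ} (σ : Equiv.Perm (Fin p)) (i j : Fin p) : Equiv.Perm (Fin p) :=
  σ * ((Finset.Icc i j).sort (· ≤ ·)).reverse.formPerm

noncomputable def extv {p : ℕ} (C : Finset (Fin p)) (y : C → ℝ) : Fin p → ℝ :=
  fun u => if h : u ∈ C then y ⟨u, h⟩ else 0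

lemma extv_mem {p : ℕ} {C : Finset (Fin p)} (y : C → ℝ) {u : Fin p} (h : u ∈ C) :
    extv C y u = y ⟨u, h⟩ := dif_pos h

lemma extv_not_mem {p : ℕ} {C : Finset (Fin p)} (y : C → ℝ) {u : Fin p} (h : u ∉ C) :
    extv C y u = 0 := dif_neg h

lemma sum_extv_mul {p : ℕ} (C : Finset (Fin p)) (y : C → ℝ) (g : Fin p → ℝ) :
    ∑ u, extv C y u * g u = ∑ a : C, y a * g a.1 := by
  rw [Finset.univ_eq_attach]
  rw [← Finset.sum_subset (Finset.subset_univ C)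
    (fun u _ hu => by rw [extv_not_mem y hu, zero_mul])]
  rw [← Finset.sum_attach C (fun u => extv C y u * g u)]
  exact Finset.sum_congr rfl fun a _ => by rw [extv_mem y a.2]
section Core
variable {p : ℕ} {S : Matrix (Fin p) (Fin p) ℝ}

lemma symdot (hsym : Sᵀ = S) (x y : Fin p → ℝ) :
    x ⬝ᵥ (S *ᵥ y) = y ⬝ᵥ (S *ᵥ x) := by
  rw [Matrix.dotProduct_mulVec, ← Matrix.mulVec_transpose, hsym, dotProduct_comm]

lemma qf_nonneg (hpos : ∀ d : Fin p → ℝ, d ≠ 0 → 0 < d ⬝ᵥ (S *ᵥ d)) (d : Fin p → ℝ) :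
    0 ≤ d ⬝ᵥ (S *ᵥ d) := by
  by_cases h : d = 0
  · simp [h]
  · exact (hpos d h).le

theorem condVar_key (hsym : Sᵀ = S) (hpos : ∀ d : Fin p → ℝ, d ≠ 0 → 0 < d ⬝ᵥ (S *ᵥ d))
    (C : Finset (Fin p)) (x : Fin p) (hx : x ∉ C) :
    ∃ r : Fin p → ℝ, r x = 1 ∧ (∀ u, u ≠ x → u ∉ C → r u = 0) ∧
      condVar S x C = r ⬝ᵥ (S *ᵥ r) ∧ (∀ u ∈ C, (S *ᵥ r) u = 0) ∧
      ∀ d : Fin p → ℝ, d x = 1 → (∀ u, u ≠ x → u ∉ C → d u = 0) →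
        condVar S x C ≤ d ⬝ᵥ (S *ᵥ d) := by
  classical
  have hSsymE : ∀ i j : Fin p, S i j = S j i := fun i j => by
    have := congrFun (congrFun hsym j) i
    simpa [Matrix.transpose_apply] using this
  set G : Matrix C C ℝ := Matrix.of (fun a b : C => S a.1 b.1) with hG
  have hGsym : Gᵀ = G := by
    ext a b
    simp only [Matrix.transpose_apply, hG, Matrix.of_apply]
    exact hSsymE b.1 a.1
  have hKsymE : ∀ a b : C, G⁻¹ a b = G⁻¹ b a := by
    intro a b
    have h : (G⁻¹)ᵀ = G⁻¹ := by rw [Matrix.transpose_nonsing_inv, hGsym]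
    exact congrFun (congrFun h b) a
  have hGform : ∀ y : C → ℝ, y ⬝ᵥ (G *ᵥ y) = extv C y ⬝ᵥ (S *ᵥ extv C y) := by
    intro y
    have h1 : extv C y ⬝ᵥ (S *ᵥ extv C y)
        = ∑ a : C, y a * (S *ᵥ extv C y) a.1 := sum_extv_mul C y _
    rw [h1]
    refine Finset.sum_congr rfl fun a _ => ?_
    have h2 : (S *ᵥ extv C y) a.1 = ∑ u, extv C y u * S a.1 u := by
      simp [Matrix.mulVec, dotProduct, mul_comm]
    rw [h2, sum_extv_mul C y (fun u => S a.1 u)]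
    have h3 : (G *ᵥ y) a = ∑ b : C, y b * S a.1 b.1 := by
      simp [Matrix.mulVec, dotProduct, hG, mul_comm]
    rw [h3]
  have hGpd : G.PosDef := by
    refine Matrix.PosDef.of_dotProduct_mulVec_pos ?_ ?_
    · ext a b
      simp only [Matrix.conjTranspose_apply, hG, Matrix.of_apply, star_trivial]
      exact hSsymE b.1 a.1
    · intro y hy
      have hyne : extv C y ≠ 0 := by
        intro h0
        apply hy
        funext a
        have := congrFun h0 a.1
        rwa [extv_mem y a.2, Subtype.coe_eta, Pi.zero_apply] at this
      have := hpos _ hyne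
      rw [← hGform] at this
      simpa using this
  have hGdet : IsUnit G.det := hGpd.det_pos.ne'.isUnit
  set s : C → ℝ := fun t => S t.1 x with hs
  set m : C → ℝ := G⁻¹ *ᵥ s with hm
  have hGm : G *ᵥ m = s := by
    rw [hm, Matrix.mulVec_mulVec, Matrix.mul_nonsing_inv _ hGdet, Matrix.one_mulVec]
  set r : Fin p → ℝ := fun u => (if u = x then 1 else 0) - extv C m u with hr
  have hrx : r x = 1 := by simp [hr, extv_not_mem m hx]
  have hrsupp : ∀ u, u ≠ x → u ∉ C → r u = 0 := by
    intro u hux huC; simp [hr, hux, extv_not_mem m huC]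
  have horth : ∀ u ∈ C, (S *ᵥ r) u = 0 := by
    intro u hu
    have h1 : (S *ᵥ r) u = S u x - ∑ u', extv C m u' * S u u' := by
      simp only [hr, Matrix.mulVec, dotProduct, mul_sub, mul_ite, mul_one, mul_zero,
        Finset.sum_sub_distrib]
      congr 1
      · rw [Finset.sum_ite_eq' Finset.univ x (fun u' => S u u')]
        simp
      · exact Finset.sum_congr rfl fun u' _ => mul_comm _ _
    rw [h1, sum_extv_mul C m (fun u' => S u u')]
    have h2 : ∑ a : C, m a * S u a.1 = (G *ᵥ m) ⟨u, hu⟩ := by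
      simp [Matrix.mulVec, dotProduct, hG, mul_comm]
    rw [h2, hGm, hs, sub_self]
  have hcvr : condVar S x C = r ⬝ᵥ (S *ᵥ r) := by
    have h1 : r ⬝ᵥ (S *ᵥ r) = (S *ᵥ r) x := by
      rw [dotProduct]
      rw [Finset.sum_eq_single_of_mem x (Finset.mem_univ x)]
      · rw [hrx, one_mul]
      · intro u _ hux
        by_cases huC : u ∈ C
        · rw [horth u huC, mul_zero]
        · rw [hrsupp u hux huC, zero_mul]
    rw [h1]
    have h2 : (S *ᵥ r) x = S x x - ∑ u', extv C m u' * S x u' := by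
      simp only [hr, Matrix.mulVec, dotProduct, mul_sub, mul_ite, mul_one, mul_zero,
        Finset.sum_sub_distrib]
      congr 1
      · rw [Finset.sum_ite_eq' Finset.univ x (fun u' => S x u')]
        simp
      · exact Finset.sum_congr rfl fun u' _ => mul_comm _ _
    rw [h2, sum_extv_mul C m (fun u' => S x u')]
    unfold condVar
    rw [← hG]
    congr 1
    rw [Finset.sum_comm]
    refine Finset.sum_congr rfl fun t _ => ?_
    rw [hm, Matrix.mulVec, dotProduct, Finset.sum_mul]
    refine Finset.sum_congr rfl fun s' _ => ?_
    rw [hKsymE s' t, hs, hSsymE x s'.1, hSsymE t.1 x]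
    ring
  refine ⟨r, hrx, hrsupp, hcvr, horth, ?_⟩
  intro d hdx hdsupp
  set e : Fin p → ℝ := d - r with he
  have hesupp : ∀ u, u ∉ C → e u = 0 := by
    intro u huC
    by_cases hux : u = x
    · subst hux; simp [he, hdx, hrx]
    · simp [he, hdsupp u hux huC, hrsupp u hux huC]
  have heSr : e ⬝ᵥ (S *ᵥ r) = 0 := by
    rw [dotProduct]
    refine Finset.sum_eq_zero fun u _ => ?_
    by_cases huC : u ∈ C
    · rw [horth u huC, mul_zero]
    · rw [hesupp u huC, zero_mul]
  have hd : d = r + e := by funext u; simp [he]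
  have expand : d ⬝ᵥ (S *ᵥ d)
      = r ⬝ᵥ (S *ᵥ r) + 2 * (e ⬝ᵥ (S *ᵥ r)) + e ⬝ᵥ (S *ᵥ e) := by
    rw [hd, Matrix.mulVec_add, dotProduct_add, add_dotProduct,
      add_dotProduct, symdot hsym r e]
    ring
  rw [hcvr, expand, heSr]
  have := qf_nonneg hpos e
  linarith
end Core
section SEM
variable {p : ℕ} {B : Matrix (Fin p) (Fin p) ℝ} {ω : Fin p → ℝ} {σs : Equiv.Perm (Fin p)}

lemma Bdiag (hσs : Consistent B σs) (i : Fin p) : B i i = 0 := by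
  by_contra h
  exact absurd (hσs i i h) (lt_irrefl _)

lemma Ntri (hσs : Consistent B σs) : (1 - B).BlockTriangular σs.symm :=
  Matrix.blockTriangular_one.sub (fun i j h => by
    by_contra hB
    exact absurd (hσs i j hB) (asymm h))

lemma Ndet (hσs : Consistent B σs) : (1 - B).det = 1 := by
  rw [← Matrix.det_submatrix_equiv_self σs (1 - B)]
  rw [Matrix.det_of_upperTriangular (M := ((1 - B).submatrix σs σs))]
  · refine Finset.prod_eq_one fun i _ => ?_
    simp [Matrix.submatrix_apply, Matrix.sub_apply, Matrix.one_apply, Bdiag hσs]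
  · intro i j hij
    exact Ntri hσs (by simpa using hij)

lemma Nunit (hσs : Consistent B σs) : IsUnit (1 - B).det := by
  rw [Ndet hσs]; exact isUnit_one

lemma NTeq : (1 - B.transpose) = (1 - B)ᵀ := by
  rw [Matrix.transpose_sub, Matrix.transpose_one]

lemma NTunit (hσs : Consistent B σs) : IsUnit ((1 - B)ᵀ).det := by
  rw [Matrix.det_transpose, Ndet hσs]; exact isUnit_one

lemma modelCov_symm (hσs : Consistent B σs) : (modelCov B ω)ᵀ = modelCov B ω := by
  rw [modelCov, NTeq]
  simp [Matrix.transpose_mul, Matrix.transpose_nonsing_inv, Matrix.diagonal_transpose,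
    Matrix.transpose_transpose, Matrix.mul_assoc]

lemma modelCov_qf (hσs : Consistent B σs) (d : Fin p → ℝ) :
    d ⬝ᵥ (modelCov B ω *ᵥ d)
      = ((1 - B)⁻¹ *ᵥ d) ⬝ᵥ (Matrix.diagonal ω *ᵥ ((1 - B)⁻¹ *ᵥ d)) := by
  rw [modelCov, NTeq]
  rw [← Matrix.mulVec_mulVec, ← Matrix.mulVec_mulVec]
  rw [Matrix.dotProduct_mulVec, ← Matrix.mulVec_transpose,
    ← Matrix.transpose_nonsing_inv, Matrix.transpose_transpose]


lemma diag_qf (z : Fin p → ℝ) :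
    z ⬝ᵥ (Matrix.diagonal ω *ᵥ z) = ∑ u, ω u * (z u)^2 := by
  rw [dotProduct]
  refine Finset.sum_congr rfl fun u _ => ?_
  rw [Matrix.mulVec_diagonal]; ring

lemma modelCov_pos (hσs : Consistent B σs) (hω : ∀ j, 0 < ω j) (d : Fin p → ℝ) (hd : d ≠ 0) :
    0 < d ⬝ᵥ (modelCov B ω *ᵥ d) := by
  rw [modelCov_qf hσs, diag_qf]
  set z := (1 - B)⁻¹ *ᵥ d with hz
  have hzne : z ≠ 0 := by
    intro h0
    apply hd
    have : (1 - B) *ᵥ z = d := by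
      rw [hz, Matrix.mulVec_mulVec, Matrix.mul_nonsing_inv _ (Nunit hσs), Matrix.one_mulVec]
    rw [← this, h0, Matrix.mulVec_zero]
  obtain ⟨u, hu⟩ := Function.ne_iff.mp hzne
  refine Finset.sum_pos' (fun v _ => mul_nonneg (hω v).le (sq_nonneg _))
    ⟨u, Finset.mem_univ u, ?_⟩
  exact mul_pos (hω u) (by simpa using sq_pos_of_ne_zero hu)

lemma Ninvtri (hσs : Consistent B σs) : ((1 - B)⁻¹).BlockTriangular σs.symm := by
  haveI := (1 - B).invertibleOfIsUnitDet (Nunit hσs)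
  exact Matrix.blockTriangular_inv_of_blockTriangular (Ntri hσs)

lemma Ninvdiag (hσs : Consistent B σs) (x : Fin p) : (1 - B)⁻¹ x x = 1 := by
  have h := Matrix.nonsing_inv_mul (1 - B) (Nunit hσs)
  have h2 := congrFun (congrFun h x) x
  simp only [Matrix.mul_apply, Matrix.one_apply_eq] at h2
  rw [Finset.sum_eq_single_of_mem x (Finset.mem_univ x)] at h2
  · simpa [Matrix.sub_apply, Matrix.one_apply_eq, Bdiag hσs] using h2
  · intro u _ hux
    by_cases hlt : σs.symm u < σs.symm x
    · rw [Ninvtri hσs hlt, zero_mul]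
    · have hB : B u x = 0 := by
        by_contra hB
        exact hlt (hσs u x hB)
      simp [Matrix.sub_apply, Matrix.one_apply_ne hux, hB]


lemma cv_pos (hσs : Consistent B σs) (hω : ∀ j, 0 < ω j) (C : Finset (Fin p)) (x : Fin p)
    (hx : x ∉ C) : 0 < condVar (modelCov B ω) x C := by
  obtain ⟨r, hrx, _, hcv, _, _⟩ :=
    condVar_key (modelCov_symm hσs) (modelCov_pos hσs hω) C x hx
  rw [hcv]
  refine modelCov_pos hσs hω r fun h0 => ?_
  rw [h0] at hrx
  simp at hrx

lemma cv_mono (hσs : Consistent B σs) (hω : ∀ j, 0 < ω j) {C₁ C₂ : Finset (Fin p)} {x : Fin p}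
    (hsub : C₁ ⊆ C₂) (hx : x ∉ C₂) :
    condVar (modelCov B ω) x C₂ ≤ condVar (modelCov B ω) x C₁ := by
  have hx1 : x ∉ C₁ := fun h => hx (hsub h)
  obtain ⟨r, hrx, hrsupp, hcv, _, _⟩ :=
    condVar_key (modelCov_symm hσs) (modelCov_pos hσs hω) C₁ x hx1
  obtain ⟨r2, _, _, _, _, hbound⟩ :=
    condVar_key (modelCov_symm hσs) (modelCov_pos hσs hω) C₂ x hx
  rw [hcv]
  exact hbound r hrx (fun u hux huC => hrsupp u hux (fun h => huC (hsub h)))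

lemma cv_le_omega (hσs : Consistent B σs) (hω : ∀ j, 0 < ω j) (C : Finset (Fin p)) (x : Fin p)
    (hx : x ∉ C) (hpar : ∀ u, B u x ≠ 0 → u ∈ C) :
    condVar (modelCov B ω) x C ≤ ω x := by
  obtain ⟨r, _, _, _, _, hbound⟩ :=
    condVar_key (modelCov_symm hσs) (modelCov_pos hσs hω) C x hx
  set d : Fin p → ℝ := fun u => (1 - B) u x with hd
  have hdx : d x = 1 := by simp [hd, Matrix.sub_apply, Matrix.one_apply_eq, Bdiag hσs]
  have hdsupp : ∀ u, u ≠ x → u ∉ C → d u = 0 := by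
    intro u hux huC
    have hB : B u x = 0 := by
      by_contra hB
      exact huC (hpar u hB)
    simp [hd, Matrix.sub_apply, Matrix.one_apply_ne hux, hB]
  refine le_trans (hbound d hdx hdsupp) (le_of_eq ?_)
  have hdv : d = (1 - B) *ᵥ Pi.single x 1 := by
    rw [Matrix.mulVec_single]
    funext u
    simp [hd]
  rw [modelCov_qf hσs, hdv, Matrix.mulVec_mulVec, Matrix.nonsing_inv_mul _ (Nunit hσs),
    Matrix.one_mulVec, diag_qf]
  rw [Finset.sum_eq_single_of_mem x (Finset.mem_univ x)]
  · simp
  · intro u _ hux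
    simp [Pi.single_apply, hux]

lemma omega_le_cv (hσs : Consistent B σs) (hω : ∀ j, 0 < ω j) (C : Finset (Fin p)) (x : Fin p)
    (hx : x ∉ C) (hlow : ∀ u ∈ C, σs.symm u < σs.symm x) :
    ω x ≤ condVar (modelCov B ω) x C := by
  obtain ⟨r, hrx, hrsupp, hcv, _, _⟩ :=
    condVar_key (modelCov_symm hσs) (modelCov_pos hσs hω) C x hx
  rw [hcv, modelCov_qf hσs, diag_qf]
  set z := (1 - B)⁻¹ *ᵥ r with hz
  have hzx : z x = 1 := by
    rw [hz, Matrix.mulVec, dotProduct]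
    rw [Finset.sum_eq_single_of_mem x (Finset.mem_univ x)]
    · rw [Ninvdiag hσs, hrx, one_mul]
    · intro u _ hux
      by_cases huC : u ∈ C
      · rw [Ninvtri hσs (hlow u huC), zero_mul]
      · rw [hrsupp u hux huC, mul_zero]
  calc ω x = ω x * (z x)^2 := by rw [hzx]; ring
  _ ≤ ∑ u, ω u * (z u)^2 :=
    Finset.single_le_sum (fun u _ => mul_nonneg (hω u).le (sq_nonneg _)) (Finset.mem_univ x)

end SEM

section Swap
variable {p : ℕ} {S : Matrix (Fin p) (Fin p) ℝ}

lemma qf_sub_smul (hsym : Sᵀ = S) (x y : Fin p → ℝ) (q : ℝ) :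
    (x - q • y) ⬝ᵥ (S *ᵥ (x - q • y))
      = x ⬝ᵥ (S *ᵥ x) - 2*q*(y ⬝ᵥ (S *ᵥ x)) + q^2*(y ⬝ᵥ (S *ᵥ y)) := by
  rw [Matrix.mulVec_sub, Matrix.mulVec_smul, dotProduct_sub, sub_dotProduct,
    sub_dotProduct, dotProduct_smul, smul_dotProduct,
    smul_dotProduct, dotProduct_smul, symdot hsym x y]
  simp only [smul_eq_mul]
  ring

lemma qf_split (hsym : Sᵀ = S) (y e : Fin p → ℝ) :
    (y - e) ⬝ᵥ (S *ᵥ (y - e))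
      = y ⬝ᵥ (S *ᵥ y) - 2*(e ⬝ᵥ (S *ᵥ y)) + e ⬝ᵥ (S *ᵥ e) := by
  rw [Matrix.mulVec_sub, dotProduct_sub, sub_dotProduct, sub_dotProduct,
    symdot hsym y e]
  ring

lemma swap_ineq (hsym : Sᵀ = S) (hpos : ∀ d : Fin p → ℝ, d ≠ 0 → 0 < d ⬝ᵥ (S *ᵥ d))
    (A : Finset (Fin p)) (v w : Fin p) (hv : v ∉ A) (hw : w ∉ A) (hvw : v ≠ w)
    (hab : condVar S v A ≤ condVar S w A) :
    condVar S v A + condVar S w (insert v A)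
      ≤ condVar S w A + condVar S v (insert w A) := by
  classical
  obtain ⟨rv, hrv1, hrvs, hrva, hrvo, _⟩ := condVar_key hsym hpos A v hv
  obtain ⟨rw', hrw1, hrws, hrwb, hrwo, _⟩ := condVar_key hsym hpos A w hw
  have hrvne : rv ≠ 0 := fun h0 => by simp [h0] at hrv1
  have hrwne : rw' ≠ 0 := fun h0 => by simp [h0] at hrw1
  set a := rv ⬝ᵥ (S *ᵥ rv) with hadef
  set b := rw' ⬝ᵥ (S *ᵥ rw') with hbdef
  set c := rv ⬝ᵥ (S *ᵥ rw') with hcdef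
  have hapos : 0 < a := hpos rv hrvne
  have hbpos : 0 < b := hpos rw' hrwne
  have hrvw : rv w = 0 := hrvs w (Ne.symm hvw) hw
  have hrwv : rw' v = 0 := hrws v hvw hv
  -- Step 1
  have hwins : w ∉ insert v A := by
    simp only [Finset.mem_insert, not_or]
    exact ⟨Ne.symm hvw, hw⟩
  have step1 : condVar S w (insert v A) ≤ b - c^2/a := by
    obtain ⟨r2, _, _, _, _, hb1⟩ := condVar_key hsym hpos (insert v A) w hwins
    have hd := hb1 (rw' - (c/a) • rv) (by simp [hrw1, hrvw]) ?_
    · refine le_trans hd (le_of_eq ?_)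
      rw [qf_sub_smul hsym rw' rv (c/a), ← hcdef, ← hadef, ← hbdef]
      field_simp
      ring
    · intro u huw huins
      simp only [Finset.mem_insert, not_or] at huins
      simp [hrws u huw huins.2, hrvs u huins.1 huins.2]
  -- Step 2
  have hvins : v ∉ insert w A := by
    simp only [Finset.mem_insert, not_or]
    exact ⟨hvw, hv⟩
  have step2 : a - c^2/b ≤ condVar S v (insert w A) := by
    obtain ⟨r2, hr21, hr2s, hr2eq, _, _⟩ := condVar_key hsym hpos (insert w A) v hvins
    set γ : ℝ := r2 w with hγ
    set y : Fin p → ℝ := rv - (-γ) • rw' with hy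
    set e : Fin p → ℝ := y - r2 with he
    have hesupp : ∀ u, u ∉ A → e u = 0 := by
      intro u huA
      by_cases huv : u = v
      · subst huv
        simp [he, hy, hrv1, hrwv, hr21]
      · by_cases huw : u = w
        · subst huw
          simp [he, hy, hrvw, hrw1, hγ]
        · have : r2 u = 0 := hr2s u huv (by simp [huw, huA])
          simp [he, hy, hrvs u huv huA, hrws u huw huA, this]
    have hr2y : r2 = y - e := by
      funext u; simp [he]
    have hcross : e ⬝ᵥ (S *ᵥ y) = 0 := by
      rw [dotProduct]
      refine Finset.sum_eq_zero fun u _ => ?_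
      by_cases huA : u ∈ A
      · have : (S *ᵥ y) u = 0 := by
          rw [hy, Matrix.mulVec_sub, Matrix.mulVec_smul]
          simp [hrvo u huA, hrwo u huA]
        rw [this, mul_zero]
      · rw [hesupp u huA, zero_mul]
    have hQy : y ⬝ᵥ (S *ᵥ y) = a + 2*γ*c + γ^2*b := by
      rw [hy, qf_sub_smul hsym rv rw' (-γ), ← hadef, ← hbdef, symdot hsym rw' rv, ← hcdef]
      ring
    have hQr2 : condVar S v (insert w A) = y ⬝ᵥ (S *ᵥ y)
        - 2 * (e ⬝ᵥ (S *ᵥ y)) + e ⬝ᵥ (S *ᵥ e) := by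
      rw [hr2eq, hr2y, qf_split hsym]
    have hQe : 0 ≤ e ⬝ᵥ (S *ᵥ e) := qf_nonneg hpos e
    rw [hQr2, hcross, hQy]
    have hpos' : 0 ≤ (γ*b + c)^2 / b := div_nonneg (sq_nonneg _) hbpos.le
    have heq : (γ*b + c)^2 / b = 2*γ*c + γ^2*b + c^2/b := by
      field_simp
      ring
    rw [heq] at hpos'
    linarith
  -- combine
  have hdiv : c^2/b ≤ c^2/a := by
    rw [div_le_div_iff₀ hbpos hapos]
    have hab' : a ≤ b := by rwa [hrva, hrwb] at hab
    nlinarith [sq_nonneg c]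
  rw [hrva, hrwb]
  linarith

end Swap

section Comb
variable {p : ℕ}

lemma R2R_adj (σ : Equiv.Perm (Fin p)) (m j : Fin p) (hmj : m < j) (hs : (j:ℕ) = (m:ℕ)+1) :
    R2R σ m j = σ * Equiv.swap j m := by
  have hIcc : Finset.Icc m j = insert m {j} := by
    ext u
    simp only [Finset.mem_Icc, Finset.mem_insert, Finset.mem_singleton, Fin.le_def, Fin.ext_iff]
    omega
  have hsort : (Finset.Icc m j).sort (· ≤ ·) = [m, j] := by
    rw [hIcc, Finset.sort_insert]
    · rw [Finset.sort_singleton]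
    · intro b hb
      rw [Finset.mem_singleton] at hb
      subst hb
      exact le_of_lt hmj
    · simp only [Finset.mem_singleton]
      exact Fin.ne_of_lt hmj
  rw [R2R, hsort]
  simp [List.formPerm_pair]

lemma swap_symm_apply (σ : Equiv.Perm (Fin p)) (m j x : Fin p) :
    (σ * Equiv.swap j m).symm x = Equiv.swap j m (σ.symm x) := by
  simp [Equiv.Perm.mul_def]

lemma PRED_swap_other (σ : Equiv.Perm (Fin p)) (m j : Fin p) (hmj : m < j)
    (hs : (j:ℕ) = (m:ℕ)+1) (k : Fin p) (hkm : σ.symm k ≠ m) (hkj : σ.symm k ≠ j) :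
    PRED (σ * Equiv.swap j m) k = PRED σ k := by
  have hkm' : ((σ.symm k : Fin p) : ℕ) ≠ (m:ℕ) := fun h => hkm (Fin.ext h)
  have hkj' : ((σ.symm k : Fin p) : ℕ) ≠ (j:ℕ) := fun h => hkj (Fin.ext h)
  ext u
  simp only [PRED, Finset.mem_filter, Finset.mem_univ, true_and, swap_symm_apply]
  rw [Equiv.swap_apply_of_ne_of_ne hkj hkm]
  by_cases h1 : σ.symm u = j
  · rw [h1, Equiv.swap_apply_left, Fin.lt_def, Fin.lt_def]
    omega
  · by_cases h2 : σ.symm u = m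
    · rw [h2, Equiv.swap_apply_right, Fin.lt_def, Fin.lt_def]
      omega
    · rw [Equiv.swap_apply_of_ne_of_ne h1 h2]

lemma PRED_swap_v (σ : Equiv.Perm (Fin p)) (m j : Fin p) (hmj : m < j)
    (hs : (j:ℕ) = (m:ℕ)+1) :
    PRED (σ * Equiv.swap j m) (σ j) = PRED σ (σ m) := by
  ext u
  simp only [PRED, Finset.mem_filter, Finset.mem_univ, true_and, swap_symm_apply,
    Equiv.symm_apply_apply, Equiv.swap_apply_left]
  by_cases h1 : σ.symm u = j
  · rw [h1, Equiv.swap_apply_left, Fin.lt_def, Fin.lt_def]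
    omega
  · by_cases h2 : σ.symm u = m
    · rw [h2, Equiv.swap_apply_right, Fin.lt_def, Fin.lt_def]
      omega
    · rw [Equiv.swap_apply_of_ne_of_ne h1 h2]

lemma PRED_swap_w (σ : Equiv.Perm (Fin p)) (m j : Fin p) (hmj : m < j)
    (hs : (j:ℕ) = (m:ℕ)+1) :
    PRED (σ * Equiv.swap j m) (σ m) = insert (σ j) (PRED σ (σ m)) := by
  have hmj' : (m:ℕ) < (j:ℕ) := hmj
  ext u
  simp only [PRED, Finset.mem_filter, Finset.mem_univ, true_and, swap_symm_apply,
    Equiv.symm_apply_apply, Equiv.swap_apply_right, Finset.mem_insert]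
  rw [show (u = σ j) ↔ (σ.symm u = j) from (Equiv.symm_apply_eq σ).symm]
  by_cases h1 : σ.symm u = j
  · rw [h1, Equiv.swap_apply_left]
    simp only [Fin.lt_def, Fin.ext_iff, eq_self_iff_true, true_or, iff_true]
    omega
  · by_cases h2 : σ.symm u = m
    · rw [h2, Equiv.swap_apply_right]
      simp only [Fin.lt_def, Fin.ext_iff]
      omega
    · rw [Equiv.swap_apply_of_ne_of_ne h1 h2]
      simp only [h1, false_or]
      have h1' : ((σ.symm u : Fin p) : ℕ) ≠ (j:ℕ) := fun h => h1 (Fin.ext h)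
      have h2' : ((σ.symm u : Fin p) : ℕ) ≠ (m:ℕ) := fun h => h2 (Fin.ext h)
      rw [Fin.lt_def, Fin.lt_def]
      omega

lemma PRED_sigma_v (σ : Equiv.Perm (Fin p)) (m j : Fin p) (hmj : m < j)
    (hs : (j:ℕ) = (m:ℕ)+1) :
    PRED σ (σ j) = insert (σ m) (PRED σ (σ m)) := by
  ext u
  simp only [PRED, Finset.mem_filter, Finset.mem_univ, true_and,
    Equiv.symm_apply_apply, Finset.mem_insert]
  rw [show (u = σ m) ↔ (σ.symm u = m) from (Equiv.symm_apply_eq σ).symm]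
  by_cases h2 : σ.symm u = m
  · rw [h2]
    simp only [Fin.lt_def, Fin.ext_iff, eq_self_iff_true, true_or, iff_true]
    omega
  · simp only [h2, false_or]
    have h2' : ((σ.symm u : Fin p) : ℕ) ≠ (m:ℕ) := fun h => h2 (Fin.ext h)
    rw [Fin.lt_def, Fin.lt_def]
    omega

end Comb


/-- No strict local optima for R2R hill climbing: in a Gaussian linear SEM whose error
variances are weakly increasing in the true ordering `σ*` and satisfying condition (5)
of the paper, every permutation `σ` not consistent with the true DAG admits an R2R move
`τ = R2R(σ, i, j)` with `∑_k ω_k^τ ≤ ∑_k ω_k^σ`. -/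
theorem stmt15 {p : ℕ} (B : Matrix (Fin p) (Fin p) ℝ) (ω : Fin p → ℝ)
    (hω : ∀ j, 0 < ω j)
    (σs : Equiv.Perm (Fin p)) (hσs : Consistent B σs)
    (hinc : Monotone fun k =>
      condVar (modelCov B ω) (σs k) (PRED σs (σs k)))
    (hcond : ∀ i j : Fin p, i < j →
      condVar (modelCov B ω) (σs i) (PRED σs (σs i)) ≤
        condVar (modelCov B ω) (σs j) (Finset.univ.erase (σs j)))
    (σ : Equiv.Perm (Fin p)) (hσ : ¬ Consistent B σ) :
    ∃ i j : Fin p, i < j ∧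
      ∑ k, condVar (modelCov B ω) k (PRED (R2R σ i j) k) ≤
        ∑ k, condVar (modelCov B ω) k (PRED σ k) := by
  classical
  unfold Consistent at hσ
  push_neg at hσ
  obtain ⟨a0, b0, hB0, hpos0⟩ := hσ
  set T : Finset (Fin p) :=
    Finset.univ.filter (fun u => ∃ u', B u' u ≠ 0 ∧ ¬ σ.symm u' < σ.symm u) with hT
  have hb0T : b0 ∈ T := Finset.mem_filter.mpr ⟨Finset.mem_univ _, ⟨a0, hB0, not_lt.mpr hpos0⟩⟩
  have hPne : (T.image σ.symm).Nonempty := ⟨σ.symm b0, Finset.mem_image_of_mem _ hb0T⟩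
  set i0 : Fin p := (T.image σ.symm).min' hPne with hi0
  obtain ⟨u0, hu0T, hu0pos⟩ := Finset.mem_image.mp ((T.image σ.symm).min'_mem hPne)
  set Rem : Finset (Fin p) := Finset.univ.filter (fun u => i0 ≤ σ.symm u) with hRem
  have hu0Rem : u0 ∈ Rem := Finset.mem_filter.mpr ⟨Finset.mem_univ _, le_of_eq hu0pos.symm⟩
  have hIne : (Rem.image σs.symm).Nonempty := ⟨σs.symm u0, Finset.mem_image_of_mem _ hu0Rem⟩
  obtain ⟨v, hvRem, hvs⟩ := Finset.mem_image.mp ((Rem.image σs.symm).min'_mem hIne)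
  have hvmin : ∀ u ∈ Rem, σs.symm v ≤ σs.symm u := by
    intro u hu
    rw [hvs]
    exact Finset.min'_le _ _ (Finset.mem_image_of_mem _ hu)
  have hi0v : i0 ≤ σ.symm v := (Finset.mem_filter.mp hvRem).2
  have hpar : ∀ u, B u v ≠ 0 → σ.symm u < i0 := by
    intro u hB
    by_contra hc
    push_neg at hc
    have huRem : u ∈ Rem := Finset.mem_filter.mpr ⟨Finset.mem_univ _, hc⟩
    exact absurd (hσs u v hB) (not_lt.mpr (hvmin u huRem))
  have hne : σ.symm v ≠ i0 := by
    intro he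
    have hv0 : v = u0 := σ.symm.injective (he.trans hu0pos.symm)
    obtain ⟨u', hu'B, hu'lt⟩ := (Finset.mem_filter.mp hu0T).2
    apply hu'lt
    have h3 := hpar u' (by rwa [hv0])
    rw [← hv0, he]
    exact h3
  have hi0lt : i0 < σ.symm v := lt_of_le_of_ne hi0v (Ne.symm hne)
  have hj1 : 1 ≤ ((σ.symm v : Fin p) : ℕ) := by
    have := Fin.lt_def.mp hi0lt
    omega
  set j' : Fin p := σ.symm v with hj'
  set m' : Fin p := ⟨(j' : ℕ) - 1, lt_of_le_of_lt (Nat.sub_le _ _) j'.isLt⟩ with hm'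
  have hmval : (m' : ℕ) = (j' : ℕ) - 1 := rfl
  have hmj : m' < j' := by
    rw [Fin.lt_def, hmval]
    omega
  have hs' : (j' : ℕ) = (m' : ℕ) + 1 := by
    rw [hmval]
    omega
  have hv' : σ j' = v := Equiv.apply_symm_apply σ v
  have hvw : v ≠ σ m' := by
    intro h
    have h2 : j' = m' := by
      rw [hj', h, Equiv.symm_apply_apply]
    rw [h2] at hmj
    exact lt_irrefl _ hmj
  have hwpos : σ.symm (σ m') = m' := Equiv.symm_apply_apply σ m'
  have hwRem : σ m' ∈ Rem := by
    refine Finset.mem_filter.mpr ⟨Finset.mem_univ _, ?_⟩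
    rw [hwpos, Fin.le_def, hmval]
    have := Fin.lt_def.mp hi0lt
    omega
  have hsvw : σs.symm v < σs.symm (σ m') :=
    lt_of_le_of_ne (hvmin _ hwRem) (fun h => hvw (σs.symm.injective h))
  have hvA : v ∉ PRED σ (σ m') := by
    simp only [PRED, Finset.mem_filter, Finset.mem_univ, true_and, not_lt, hwpos, ← hj']
    exact le_of_lt hmj
  have hwA : σ m' ∉ PRED σ (σ m') := by
    simp [PRED]
  have hparA : ∀ u, B u v ≠ 0 → u ∈ PRED σ (σ m') := by
    intro u hB
    refine Finset.mem_filter.mpr ⟨Finset.mem_univ _, ?_⟩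
    rw [hwpos, Fin.lt_def, hmval]
    have h1 := Fin.lt_def.mp (hpar u hB)
    have h2 := Fin.lt_def.mp hi0lt
    omega
  -- the chain cv(v|A) ≤ cv(w|A)
  have c1 : condVar (modelCov B ω) v (PRED σ (σ m')) ≤ ω v :=
    cv_le_omega hσs hω _ v hvA hparA
  have c2 : ω v ≤ condVar (modelCov B ω) v (PRED σs v) := by
    refine omega_le_cv hσs hω _ v ?_ ?_
    · simp [PRED]
    · exact fun u hu => (Finset.mem_filter.mp hu).2
  have c3 : condVar (modelCov B ω) v (PRED σs v)
      ≤ condVar (modelCov B ω) (σ m') (Finset.univ.erase (σ m')) := by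
    have h := hcond (σs.symm v) (σs.symm (σ m')) hsvw
    simpa [Equiv.apply_symm_apply] using h
  have c4 : condVar (modelCov B ω) (σ m') (Finset.univ.erase (σ m'))
      ≤ condVar (modelCov B ω) (σ m') (PRED σ (σ m')) := by
    refine cv_mono hσs hω ?_ ?_
    · intro u hu
      exact Finset.mem_erase.mpr ⟨fun he => hwA (he ▸ hu), Finset.mem_univ u⟩
    · simp
  have hab : condVar (modelCov B ω) v (PRED σ (σ m'))
      ≤ condVar (modelCov B ω) (σ m') (PRED σ (σ m')) :=
    le_trans c1 (le_trans c2 (le_trans c3 c4))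
  have hswap := swap_ineq (modelCov_symm hσs) (modelCov_pos hσs hω) (PRED σ (σ m'))
    v (σ m') hvA hwA hvw hab
  have hR2R : R2R σ m' j' = σ * Equiv.swap j' m' := R2R_adj σ m' j' hmj hs'
  refine ⟨m', j', hmj, ?_⟩
  have hτv : PRED (R2R σ m' j') v = PRED σ (σ m') := by
    rw [hR2R, ← hv']
    exact PRED_swap_v σ m' j' hmj hs'
  have hτw : PRED (R2R σ m' j') (σ m') = insert v (PRED σ (σ m')) := by
    rw [hR2R, ← hv']
    exact PRED_swap_w σ m' j' hmj hs'
  have hσv : PRED σ v = insert (σ m') (PRED σ (σ m')) := by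
    rw [← hv']
    exact PRED_sigma_v σ m' j' hmj hs'
  have hτother : ∀ k, k ≠ v → k ≠ σ m' → PRED (R2R σ m' j') k = PRED σ k := by
    intro k hkv hkw
    rw [hR2R]
    refine PRED_swap_other σ m' j' hmj hs' k ?_ ?_
    · intro h
      exact hkw (σ.symm.injective (h.trans hwpos.symm))
    · intro h
      exact hkv (σ.symm.injective (h.trans hj'))
  have hsplit : ∀ g : Fin p → ℝ,
      ∑ k, g k = g v + g (σ m') + ∑ k ∈ Finset.univ \ {v, σ m'}, g k := by
    intro g
    rw [← Finset.sum_sdiff (Finset.subset_univ {v, σ m'}), Finset.sum_pair hvw]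
    ring
  rw [hsplit (fun k => condVar (modelCov B ω) k (PRED (R2R σ m' j') k)),
    hsplit (fun k => condVar (modelCov B ω) k (PRED σ k))]
  have htail : ∑ k ∈ Finset.univ \ {v, σ m'},
        condVar (modelCov B ω) k (PRED (R2R σ m' j') k)
      = ∑ k ∈ Finset.univ \ {v, σ m'}, condVar (modelCov B ω) k (PRED σ k) := by
    refine Finset.sum_congr rfl fun k hk => ?_
    simp only [Finset.mem_sdiff, Finset.mem_insert, Finset.mem_singleton, not_or] at hk
    rw [hτother k hk.2.1 hk.2.2]
  rw [htail, hτv, hτw, hσv]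
  linarith
end

section
/- For any permutation σ, indices i < j, and τ = R2R(σ, i, j), the products of the affected conditional variances agree: ∏_{k=i}^j ω^σ_{σ(k)} = ∏_{k=i}^j ω^τ_{τ(k)}. -/
open Matrix BigOperators

section Aux

/-- A principal submatrix of a positive definite matrix is positive definite. -/
lemma posDef_submatrix' {n m : Type*} [Fintype n] [Fintype m] {M : Matrix n n ℝ}
    (hM : M.PosDef) (e : m → n) (he : Function.Injective e) :
    (M.submatrix e e).PosDef := by
  classical
  refine PosDef.of_dotProduct_mulVec_pos (hM.1.submatrix e) fun x hx => ?_
  set y : n → ℝ := fun k => ∑ a : m, if k = e a then x a else 0 with hy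
  have hye : ∀ a : m, y (e a) = x a := by
    intro a
    simp only [hy]
    rw [Finset.sum_eq_single a]
    · simp
    · intro b _ hb
      rw [if_neg (fun h => hb (he h.symm))]
    · simp
  have hy0 : ∀ k : n, k ∉ Finset.univ.image e → y k = 0 := by
    intro k hk
    simp only [hy]
    apply Finset.sum_eq_zero
    intro b _
    have : k ≠ e b := fun h => hk (Finset.mem_image.2 ⟨b, Finset.mem_univ b, h.symm⟩)
    simp [this]
  have hsum : ∀ f : n → ℝ, (∑ k, y k * f k) = ∑ a, x a * f (e a) := by
    intro f
    rw [← Finset.sum_subset (Finset.subset_univ (Finset.univ.image e))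
        (fun k _ hk => by rw [hy0 k hk, zero_mul]),
      Finset.sum_image (fun a _ b _ h => he h)]
    exact Finset.sum_congr rfl fun a _ => by rw [hye]
  have hyn : y ≠ 0 := by
    intro h
    apply hx
    funext a
    have := congrFun h (e a)
    rwa [hye] at this
  have key : star x ⬝ᵥ (M.submatrix e e) *ᵥ x = star y ⬝ᵥ M *ᵥ y := by
    simp only [dotProduct, Pi.star_apply, star_trivial, mulVec, dotProduct, submatrix_apply]
    rw [hsum fun k => ∑ l, M k l * y l]
    refine Finset.sum_congr rfl fun a _ => ?_
    congr 1
    rw [show (∑ l, M (e a) l * y l) = ∑ l, y l * M (e a) l from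
      Finset.sum_congr rfl fun l _ => mul_comm _ _, hsum fun l => M (e a) l]
    exact Finset.sum_congr rfl fun b _ => mul_comm _ _
  rw [key]
  exact hM.dotProduct_mulVec_pos hyn

/-- The principal submatrix of `S` indexed by the finset `A`. -/
noncomputable def subm {p : ℕ} (S : Matrix (Fin p) (Fin p) ℝ) (A : Finset (Fin p)) :
    Matrix A A ℝ := Matrix.of fun a b : A => S a.1 b.1

lemma subm_posDef {p : ℕ} {S : Matrix (Fin p) (Fin p) ℝ} (hS : S.PosDef)
    (A : Finset (Fin p)) : (subm S A).PosDef :=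
  posDef_submatrix' hS Subtype.val Subtype.val_injective

lemma subm_det_pos {p : ℕ} {S : Matrix (Fin p) (Fin p) ℝ} (hS : S.PosDef)
    (A : Finset (Fin p)) : 0 < (subm S A).det :=
  (subm_posDef hS A).det_pos

/-- Schur complement formula: the conditional variance is a ratio of principal minors. -/
lemma condVar_eq_det_div {p : ℕ} {S : Matrix (Fin p) (Fin p) ℝ} (hS : S.PosDef)
    {j : Fin p} {A : Finset (Fin p)} (hj : j ∉ A) :
    condVar S j A = (subm S (insert j A)).det / (subm S A).det := by
  classical
  set B := subm S A with hB
  have hBpd := subm_posDef hS A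
  have : Invertible B := Matrix.invertibleOfIsUnitDet B hBpd.det_pos.ne'.isUnit
  set Bc : Matrix A Unit ℝ := Matrix.of fun (a : A) (_ : Unit) => S a.1 j with hBc
  set Cr : Matrix Unit A ℝ := Matrix.of fun (_ : Unit) (b : A) => S j b.1 with hCr
  set D : Matrix Unit Unit ℝ := Matrix.of fun _ _ => S j j with hD
  set N := Matrix.fromBlocks B Bc Cr D with hN
  set f : (A ⊕ Unit) → (insert j A : Finset (Fin p)) :=
    Sum.elim (fun a => ⟨a.1, Finset.mem_insert_of_mem a.2⟩)
      (fun _ => ⟨j, Finset.mem_insert_self j A⟩) with hf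
  have hfb : Function.Bijective f := by
    constructor
    · rintro (a | a) (b | b) h
      · simp only [hf, Sum.elim_inl, Subtype.mk.injEq] at h
        exact congrArg Sum.inl (Subtype.ext h)
      · simp only [hf, Sum.elim_inl, Sum.elim_inr, Subtype.mk.injEq] at h
        exact absurd (h ▸ a.2) hj
      · simp only [hf, Sum.elim_inl, Sum.elim_inr, Subtype.mk.injEq] at h
        exact absurd (h.symm ▸ b.2) hj
      · rfl
    · rintro ⟨x, hx⟩
      rcases Finset.mem_insert.1 hx with h | h
      · exact ⟨Sum.inr (), by simp [hf, h]⟩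
      · exact ⟨Sum.inl ⟨x, h⟩, rfl⟩
  set e : (A ⊕ Unit) ≃ (insert j A : Finset (Fin p)) := Equiv.ofBijective f hfb with he
  have hsub : (subm S (insert j A)).submatrix e e = N := by
    ext a b
    rcases a with a | a <;> rcases b with b | b <;>
      simp only [Matrix.submatrix_apply, hN, Matrix.fromBlocks_apply₁₁,
        Matrix.fromBlocks_apply₁₂, Matrix.fromBlocks_apply₂₁,
        Matrix.fromBlocks_apply₂₂] <;> rfl
  have hdet : (subm S (insert j A)).det = N.det := by
    rw [← Matrix.det_submatrix_equiv_self e, hsub]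
  have hq : N.det = B.det * (S j j - ∑ s : A, ∑ t : A,
      S j s.1 * B⁻¹ s t * S t.1 j) := by
    rw [hN, Matrix.det_fromBlocks₁₁, Matrix.invOf_eq_nonsing_inv]
    congr 1
    rw [Matrix.det_unique]
    simp only [Matrix.sub_apply, hD, Matrix.of_apply]
    congr 1
    calc (Cr * B⁻¹ * Bc) default default
        = ∑ t : A, (∑ s : A, S j s.1 * B⁻¹ s t) * S t.1 j := by
          simp [Matrix.mul_apply, hCr, hBc]
      _ = ∑ t : A, ∑ s : A, S j s.1 * B⁻¹ s t * S t.1 j := by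
          refine Finset.sum_congr rfl fun t _ => ?_
          rw [Finset.sum_mul]
      _ = ∑ s : A, ∑ t : A, S j s.1 * B⁻¹ s t * S t.1 j := Finset.sum_comm
  rw [hdet, hq, mul_div_cancel_left₀ _ hBpd.det_pos.ne']
  rfl

/-- `PRED σ (σ k)` is the image under `σ` of the positions before `k`. -/
lemma pred_eq {p : ℕ} (σ : Equiv.Perm (Fin p)) (k : Fin p) :
    PRED σ (σ k) = (Finset.Iio k).image σ := by
  ext x
  simp only [PRED, Finset.mem_filter, Finset.mem_univ, true_and, Finset.mem_image,
    Finset.mem_Iio, Equiv.symm_apply_apply]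
  constructor
  · intro h
    exact ⟨σ.symm x, h, σ.apply_symm_apply x⟩
  · rintro ⟨m, hm, rfl⟩
    rwa [Equiv.symm_apply_apply]

/-- telescoping product lemma over `ℕ`. -/
lemma prod_Icc_div {g : ℕ → ℝ} (hg : ∀ n, g n ≠ 0) (a : ℕ) :
    ∀ b, a ≤ b → (∏ n ∈ Finset.Icc a b, g (n + 1) / g n) = g (b + 1) / g a := by
  intro b hab
  induction b, hab using Nat.le_induction with
  | base => simp
  | succ b hb ih =>
      have hins : Finset.Icc a (b + 1) = insert (b + 1) (Finset.Icc a b) := by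
        ext n
        simp only [Finset.mem_Icc, Finset.mem_insert]
        omega
      rw [hins, Finset.prod_insert (by simp), ih]
      rw [div_mul_div_comm, show g (b + 1 + 1) * g (b + 1) = g (b + 1) * g (b + 1 + 1) from
        mul_comm _ _, mul_div_mul_left _ _ (hg (b + 1))]

end Aux

/-- For `τ = R2R(σ, i, j)`, the products of the affected conditional variances agree:
`∏_{k=i}^j ω^σ_{σ(k)} = ∏_{k=i}^j ω^τ_{τ(k)}`. -/
theorem stmt17 {p : ℕ} (S : Matrix (Fin p) (Fin p) ℝ) (hS : S.PosDef)
    (σ : Equiv.Perm (Fin p)) (i j : Fin p) (hij : i < j) :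
    ∏ k ∈ Finset.Icc i j, condVar S (σ k) (PRED σ (σ k)) =
      ∏ k ∈ Finset.Icc i j,
        condVar S ((R2R σ i j) k) (PRED (R2R σ i j) ((R2R σ i j) k)) := by
  classical
  -- the finset of positions with value < n
  set P : ℕ → Finset (Fin p) := fun n => Finset.univ.filter fun x : Fin p => (x : ℕ) < n with hP
  have hPIio : ∀ k : Fin p, P (k : ℕ) = Finset.Iio k := by
    intro k; ext x
    simp only [hP, Finset.mem_filter, Finset.mem_univ, true_and, Finset.mem_Iio, Fin.lt_def]
  have hPIic : ∀ k : Fin p, P ((k : ℕ) + 1) = Finset.Iic k := by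
    intro k; ext x
    simp only [hP, Finset.mem_filter, Finset.mem_univ, true_and, Finset.mem_Iic, Fin.le_def,
      Nat.lt_succ_iff]
  -- the key reduction: the product equals a ratio of dets depending only on images of P
  have main : ∀ ρ : Equiv.Perm (Fin p),
      (∏ k ∈ Finset.Icc i j, condVar S (ρ k) (PRED ρ (ρ k))) =
        (subm S ((P ((j : ℕ) + 1)).image ρ)).det / (subm S ((P (i : ℕ)).image ρ)).det := by
    intro ρ
    set g : ℕ → ℝ := fun n => (subm S ((P n).image ρ)).det with hg
    have hgpos : ∀ n, g n ≠ 0 := fun n => (subm_det_pos hS _).ne'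
    have hterm : ∀ k ∈ Finset.Icc i j,
        condVar S (ρ k) (PRED ρ (ρ k)) = g ((k : ℕ) + 1) / g (k : ℕ) := by
      intro k _
      have hnm : ρ k ∉ (Finset.Iio k).image ρ := by
        simp only [Finset.mem_image, Finset.mem_Iio, not_exists, not_and]
        intro m hm hmk
        exact absurd (ρ.injective hmk) (ne_of_lt hm)
      have hins : insert (ρ k) ((Finset.Iio k).image ρ) = (Finset.Iic k).image ρ := by
        rw [← Finset.Iio_insert, Finset.image_insert]
      rw [pred_eq, condVar_eq_det_div hS hnm, hins]
      simp only [hg]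
      rw [hPIio, hPIic]
    rw [Finset.prod_congr rfl hterm]
    -- transfer the product over `Fin p` to a product over `ℕ`
    have hmap : (Finset.Icc i j).image (Fin.val) = Finset.Icc (i : ℕ) (j : ℕ) := by
      rw [← Fin.map_valEmbedding_Icc, Finset.map_eq_image]
      rfl
    rw [show (∏ k ∈ Finset.Icc i j, g ((k : ℕ) + 1) / g (k : ℕ))
        = ∏ n ∈ Finset.Icc (i : ℕ) (j : ℕ), g (n + 1) / g n by
      rw [← hmap, Finset.prod_image (fun a _ b _ h => Fin.val_injective h)]]
    exact prod_Icc_div hgpos _ _ (Nat.le_of_lt hij)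
  -- the permutation part of R2R
  set l : List (Fin p) := ((Finset.Icc i j).sort (· ≤ ·)).reverse with hl
  set π : Equiv.Perm (Fin p) := l.formPerm with hπ
  have hmem : ∀ x : Fin p, x ∈ l ↔ x ∈ Finset.Icc i j := by
    intro x; simp [hl, Finset.mem_sort]
  have hfix : ∀ x : Fin p, x ∉ Finset.Icc i j → π x = x := by
    intro x hx
    exact List.formPerm_apply_of_notMem (fun h => hx ((hmem x).1 h))
  have hmaps : ∀ x : Fin p, x ∈ Finset.Icc i j → π x ∈ Finset.Icc i j := by
    intro x hx
    exact (hmem _).1 (List.formPerm_apply_mem_of_mem ((hmem x).2 hx))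
  -- π fixes Iio i pointwise and maps Iic j onto itself
  have himg1 : (Finset.Iio i).image π = Finset.Iio i := by
    rw [Finset.image_congr (g := id) (fun x hx => hfix x (by
      simp only [Finset.coe_Iio, Set.mem_Iio] at hx
      simp only [Finset.mem_Icc]
      intro h
      exact absurd h.1 (not_le_of_gt hx)))]
    exact Finset.image_id
  have himg2 : (Finset.Iic j).image π = Finset.Iic j := by
    apply Finset.eq_of_subset_of_card_le
    · intro x hx
      rcases Finset.mem_image.1 hx with ⟨y, hy, rfl⟩
      rw [Finset.mem_Iic] at hy
      by_cases h : y ∈ Finset.Icc i j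
      · exact Finset.mem_Iic.2 (Finset.mem_Icc.1 (hmaps y h)).2
      · rw [hfix y h]; exact Finset.mem_Iic.2 hy
    · rw [Finset.card_image_of_injective _ π.injective]
  -- combine
  have himage : ∀ n ∈ ({(i : ℕ), (j : ℕ) + 1} : Finset ℕ),
      (P n).image (R2R σ i j) = (P n).image σ := by
    intro n hn
    have : (P n).image (R2R σ i j) = ((P n).image π).image σ := by
      rw [Finset.image_image]
      rfl
    rw [this]
    rcases Finset.mem_insert.1 hn with rfl | hn
    · rw [hPIio, himg1]
    · rw [Finset.mem_singleton.1 hn, hPIic, himg2]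
  rw [main σ, main (R2R σ i j),
    himage _ (by simp), himage ((i : ℕ)) (by simp)]
end

section
/- If all error variances in a Gaussian linear SEM are equal (Ω* = ω* I), then for every permutation σ, tr(Ω*_σ) ≥ tr(Ω*) = p ω*, with equality if and only if σ is consistent with the true DAG; consequently the true DAG is the unique minimum-trace DAG. -/
open Matrix BigOperators

namespace Stmt19aux
variable {p : ℕ}

lemma sum_dite (A : Finset (Fin p)) (F : ∀ i, i ∈ A → ℝ) :
    ∑ i : Fin p, (if h : i ∈ A then F i h else 0) = ∑ a : A, F a.1 a.2 := by
  classical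
  rw [show (∑ i : Fin p, (if h : i ∈ A then F i h else 0))
      = ∑ i ∈ A, (if h : i ∈ A then F i h else 0) from
    (Finset.sum_subset (Finset.subset_univ A) (by intro i _ hi; rw [dif_neg hi])).symm]
  rw [Finset.univ_eq_attach, ← Finset.sum_attach A (fun i => if h : i ∈ A then F i h else 0)]
  exact Finset.sum_congr rfl (fun a _ => by rw [dif_pos a.2])

noncomputable def Wmat (S : Matrix (Fin p) (Fin p) ℝ) (A : Finset (Fin p)) :
    Matrix A A ℝ := Matrix.of fun a b : A => S a.1 b.1

noncomputable def regr (S : Matrix (Fin p) (Fin p) ℝ) (j : Fin p) (A : Finset (Fin p)) :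
    Fin p → ℝ := fun i =>
  if h : i ∈ A then ∑ t : A, (Wmat S A)⁻¹ ⟨i, h⟩ t * S t.1 j else 0

noncomputable def resid (S : Matrix (Fin p) (Fin p) ℝ) (j : Fin p) (A : Finset (Fin p)) :
    Fin p → ℝ := fun i => (Pi.single j 1 : Fin p → ℝ) i - regr S j A i

lemma regr_not_mem {S : Matrix (Fin p) (Fin p) ℝ} {j : Fin p} {A : Finset (Fin p)}
    {i : Fin p} (h : i ∉ A) : regr S j A i = 0 := dif_neg h

lemma resid_self {S : Matrix (Fin p) (Fin p) ℝ} {j : Fin p} {A : Finset (Fin p)}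
    (h : j ∉ A) : resid S j A j = 1 := by
  simp [resid, regr_not_mem h]

lemma resid_support {S : Matrix (Fin p) (Fin p) ℝ} {j : Fin p} {A : Finset (Fin p)}
    {i : Fin p} (h : resid S j A i ≠ 0) : i = j ∨ i ∈ A := by
  by_contra hc
  push_neg at hc
  exact h (by simp [resid, regr_not_mem hc.2, Pi.single_eq_of_ne hc.1])

noncomputable def ext0 (A : Finset (Fin p)) (x : A → ℝ) : Fin p → ℝ :=
  fun i => if h : i ∈ A then x ⟨i, h⟩ else 0

lemma ext0_ne_zero {A : Finset (Fin p)} {x : A → ℝ} (hx : x ≠ 0) : ext0 A x ≠ 0 := by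
  obtain ⟨a, ha⟩ := Function.ne_iff.mp hx
  intro h
  apply ha
  have := congrFun h a.1
  simpa [ext0, a.2] using this

lemma mulVec_ext0 (S : Matrix (Fin p) (Fin p) ℝ) (A : Finset (Fin p)) (x : A → ℝ)
    (i : Fin p) : (S *ᵥ ext0 A x) i = ∑ b : A, S i b.1 * x b := by
  show ∑ k, S i k * ext0 A x k = _
  unfold ext0
  simp_rw [mul_dite, mul_zero]
  exact sum_dite A _

lemma dot_ext0 (A : Finset (Fin p)) (x : A → ℝ) (g : Fin p → ℝ) :
    ext0 A x ⬝ᵥ g = ∑ a : A, x a * g a.1 := by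
  show ∑ i, ext0 A x i * g i = _
  unfold ext0
  simp_rw [dite_mul, zero_mul]
  exact sum_dite A _

lemma wmat_posDef {S : Matrix (Fin p) (Fin p) ℝ} (hsym : Sᵀ = S) (hpd : S.PosDef)
    (A : Finset (Fin p)) : (Wmat S A).PosDef := by
  refine Matrix.PosDef.of_dotProduct_mulVec_pos ?_ ?_
  · rw [Matrix.IsHermitian, conjTranspose_eq_transpose_of_trivial]
    ext a b
    have := congrFun (congrFun hsym a.1) b.1
    simpa [Wmat] using this
  · intro x hx
    have h := hpd.dotProduct_mulVec_pos (ext0_ne_zero hx)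
    rw [show star (ext0 A x) = ext0 A x by simp] at h
    rw [dot_ext0] at h
    simp_rw [mulVec_ext0] at h
    rw [show star x = x by simp]
    convert h using 1
    rfl

lemma dot_swap {S : Matrix (Fin p) (Fin p) ℝ} (hsym : Sᵀ = S) (u v : Fin p → ℝ) :
    u ⬝ᵥ (S *ᵥ v) = v ⬝ᵥ (S *ᵥ u) := by
  rw [dotProduct_mulVec]
  conv_lhs => rw [← hsym]
  rw [vecMul_transpose, dotProduct_comm]

lemma wmat_mul_inv {S : Matrix (Fin p) (Fin p) ℝ} (hsym : Sᵀ = S) (hpd : S.PosDef)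
    (A : Finset (Fin p)) : Wmat S A * (Wmat S A)⁻¹ = 1 :=
  mul_nonsing_inv _ (wmat_posDef hsym hpd A).det_pos.ne'.isUnit

lemma mulVec_resid_mem {S : Matrix (Fin p) (Fin p) ℝ} (hsym : Sᵀ = S) (hpd : S.PosDef)
    {A : Finset (Fin p)} (j : Fin p) {i : Fin p} (hi : i ∈ A) :
    (S *ᵥ resid S j A) i = 0 := by
  have hr : resid S j A = (Pi.single j 1 : Fin p → ℝ) - regr S j A := rfl
  rw [hr, mulVec_sub, Pi.sub_apply, mulVec_single]
  have hregr : regr S j A = ext0 A (fun a => ∑ t : A, (Wmat S A)⁻¹ a t * S t.1 j) := rfl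
  rw [hregr, mulVec_ext0]
  have key : ∑ b : A, S i b.1 * ∑ t : A, (Wmat S A)⁻¹ b t * S t.1 j = S i j := by
    simp_rw [Finset.mul_sum, ← mul_assoc]
    rw [Finset.sum_comm]
    have : ∀ t : A, ∑ b : A, S i b.1 * (Wmat S A)⁻¹ b t * S t.1 j
        = ((Wmat S A * (Wmat S A)⁻¹) ⟨i, hi⟩ t) * S t.1 j := by
      intro t
      rw [Matrix.mul_apply, Finset.sum_mul]
      rfl
    simp_rw [this, wmat_mul_inv hsym hpd A]
    simp [Matrix.one_apply]
  rw [key]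
  simp

lemma resid_dot {S : Matrix (Fin p) (Fin p) ℝ} (hsym : Sᵀ = S) (hpd : S.PosDef)
    {j : Fin p} {A : Finset (Fin p)} (hj : j ∉ A) :
    resid S j A ⬝ᵥ (S *ᵥ resid S j A) = condVar S j A := by
  have h1 : resid S j A ⬝ᵥ (S *ᵥ resid S j A) = (S *ᵥ resid S j A) j := by
    show ∑ i, resid S j A i * (S *ᵥ resid S j A) i = _
    rw [Finset.sum_eq_single j]
    · rw [resid_self hj, one_mul]
    · intro k _ hk
      by_cases hr : resid S j A k = 0
      · rw [hr, zero_mul]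
      · rcases resid_support hr with h | h
        · exact absurd h hk
        · rw [mulVec_resid_mem hsym hpd j h, mul_zero]
    · simp
  rw [h1]
  have hr : resid S j A = (Pi.single j 1 : Fin p → ℝ) - regr S j A := rfl
  rw [hr, mulVec_sub, Pi.sub_apply, mulVec_single]
  have hregr : regr S j A = ext0 A (fun a => ∑ t : A, (Wmat S A)⁻¹ a t * S t.1 j) := rfl
  rw [hregr, mulVec_ext0]
  unfold condVar
  simp_rw [Finset.mul_sum, ← mul_assoc]
  show S j j * 1 - ∑ b : A, ∑ t : A, S j b.1 * (Wmat S A)⁻¹ b t * S t.1 j = _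
  rw [mul_one]
  rfl

lemma condVar_pos {S : Matrix (Fin p) (Fin p) ℝ} (hsym : Sᵀ = S) (hpd : S.PosDef)
    {j : Fin p} {A : Finset (Fin p)} (hj : j ∉ A) : 0 < condVar S j A := by
  rw [← resid_dot hsym hpd hj]
  have hne : resid S j A ≠ 0 := by
    intro h0
    have := congrFun h0 j
    rw [resid_self hj] at this
    simpa using this
  have h := hpd.dotProduct_mulVec_pos hne
  rwa [show star (resid S j A) = resid S j A by simp] at h

lemma condVar_le {S : Matrix (Fin p) (Fin p) ℝ} (hsym : Sᵀ = S) (hpd : S.PosDef)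
    {j : Fin p} {A : Finset (Fin p)} (hj : j ∉ A) (v : Fin p → ℝ)
    (hvj : v j = 1) (hsupp : ∀ i, i ≠ j → v i ≠ 0 → i ∈ A) :
    condVar S j A ≤ v ⬝ᵥ S *ᵥ v := by
  classical
  set r := resid S j A with hrdef
  set d := v - r with hddef
  have hd : ∀ i, d i ≠ 0 → i ∈ A := by
    intro i hdi
    by_contra hiA
    apply hdi
    by_cases hij : i = j
    · rw [hij]
      have h1 : r j = 1 := resid_self hj
      simp [hddef, hvj, h1]
    · have hv0 : v i = 0 := by
        by_contra h
        exact hiA (hsupp i hij h)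
      have hr0 : r i = 0 := by
        by_contra h
        rcases resid_support h with h' | h'
        · exact hij h'
        · exact hiA h'
      simp [hddef, hv0, hr0]
  have hdSr : d ⬝ᵥ (S *ᵥ r) = 0 := by
    apply Finset.sum_eq_zero
    intro i _
    by_cases h0 : d i = 0
    · rw [h0, zero_mul]
    · rw [mulVec_resid_mem hsym hpd j (hd i h0), mul_zero]
  have hrSd : r ⬝ᵥ (S *ᵥ d) = 0 := by
    rw [dotProduct_mulVec, ← hsym, vecMul_transpose, dotProduct_comm]
    exact hdSr
  have hdSd : 0 ≤ d ⬝ᵥ (S *ᵥ d) := by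
    have h := hpd.posSemidef.dotProduct_mulVec_nonneg d
    rwa [show star d = d by simp] at h
  have hv : v = r + d := by
    funext i
    simp [hddef]
  rw [hv, add_dotProduct, mulVec_add, dotProduct_add, dotProduct_add,
    resid_dot hsym hpd hj, hrSd, hdSr]
  linarith

end Stmt19aux

namespace Stmt19aux
variable {p : ℕ}

lemma mem_PRED {σ : Equiv.Perm (Fin p)} {i j : Fin p} :
    i ∈ PRED σ j ↔ σ.symm i < σ.symm j := by simp [PRED]

lemma not_mem_PRED_self {σ : Equiv.Perm (Fin p)} {j : Fin p} : j ∉ PRED σ j := by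
  simp [PRED]

set_option maxHeartbeats 1600000 in
lemma prod_condVar {S : Matrix (Fin p) (Fin p) ℝ} (hsym : Sᵀ = S) (hpd : S.PosDef)
    (σ : Equiv.Perm (Fin p)) :
    ∏ j, condVar S j (PRED σ j) = S.det := by
  classical
  set C : Matrix (Fin p) (Fin p) ℝ := Matrix.of fun i j => resid S j (PRED σ j) i with hC
  have horth : ∀ k j : Fin p, σ.symm k < σ.symm j →
      resid S k (PRED σ k) ⬝ᵥ (S *ᵥ resid S j (PRED σ j)) = 0 := by
    intro k j hkj
    apply Finset.sum_eq_zero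
    intro i _
    by_cases h0 : resid S k (PRED σ k) i = 0
    · rw [h0, zero_mul]
    · have hiA : i ∈ PRED σ j := by
        rcases resid_support h0 with h | h
        · rw [h]; exact mem_PRED.mpr hkj
        · exact mem_PRED.mpr ((mem_PRED.mp h).trans hkj)
      rw [mulVec_resid_mem hsym hpd j hiA, mul_zero]
  have hentry : ∀ k j : Fin p, (Cᵀ * S * C) k j
      = resid S k (PRED σ k) ⬝ᵥ (S *ᵥ resid S j (PRED σ j)) := by
    intro k j
    rw [Matrix.mul_assoc, Matrix.mul_apply]
    refine Finset.sum_congr rfl fun i _ => ?_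
    rw [Matrix.transpose_apply, Matrix.mul_apply]
    rfl
  have hdiag : Cᵀ * S * C = Matrix.diagonal (fun j => condVar S j (PRED σ j)) := by
    ext k j
    rw [hentry]
    by_cases hkj : k = j
    · subst hkj
      rw [Matrix.diagonal_apply_eq]
      exact resid_dot hsym hpd not_mem_PRED_self
    · rw [Matrix.diagonal_apply_ne _ hkj]
      rcases lt_or_gt_of_ne (fun h => hkj (σ.symm.injective h) : σ.symm k ≠ σ.symm j) with h | h
      · exact horth k j h
      · rw [dot_swap hsym]
        exact horth j k h
  have hCdet : C.det = 1 := by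
    rw [← Matrix.det_submatrix_equiv_self σ C]
    have htri : (C.submatrix σ σ).BlockTriangular id := by
      intro a b hba
      simp only [id] at hba
      by_contra h0
      have := resid_support (show resid S (σ b) (PRED σ (σ b)) (σ a) ≠ 0 from h0)
      rcases this with h | h
      · exact absurd (σ.injective h) (ne_of_gt hba)
      · have := mem_PRED.mp h
        simp only [Equiv.symm_apply_apply] at this
        exact absurd hba (not_lt_of_gt this)
    rw [Matrix.det_of_upperTriangular htri]
    apply Finset.prod_eq_one
    intro a _
    show resid S (σ a) (PRED σ (σ a)) (σ a) = 1
    exact resid_self not_mem_PRED_self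
  have := congrArg Matrix.det hdiag
  rw [Matrix.det_mul, Matrix.det_mul, Matrix.det_transpose, hCdet, Matrix.det_diagonal] at this
  rw [← this]
  ring

lemma amgm (c : ℝ) (hc : 0 < c) (x : Fin p → ℝ) (hx : ∀ j, 0 < x j)
    (hprod : ∏ j, x j = c ^ p) :
    (p : ℝ) * c ≤ ∑ j, x j ∧ ((∑ j, x j = (p : ℝ) * c) ↔ ∀ j, x j = c) := by
  have hlog : ∑ j, Real.log (x j / c) = 0 := by
    rw [← Real.log_prod (fun j _ => (div_pos (hx j) hc).ne')]
    rw [Finset.prod_div_distrib, hprod, Finset.prod_const, Finset.card_univ, Fintype.card_fin,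
      div_self (by positivity), Real.log_one]
  have hle : ∀ j, Real.log (x j / c) ≤ x j / c - 1 := fun j =>
    Real.log_le_sub_one_of_pos (div_pos (hx j) hc)
  have hsum : (0 : ℝ) ≤ ∑ j, (x j / c - 1) := by
    rw [← hlog]
    exact Finset.sum_le_sum fun j _ => hle j
  have hsum' : ∑ j : Fin p, (x j / c - 1) = (∑ j, x j) / c - p := by
    rw [Finset.sum_sub_distrib, ← Finset.sum_div]
    simp
  have h1 : (p : ℝ) * c ≤ ∑ j, x j := by
    rw [hsum'] at hsum
    have h2 : (p : ℝ) ≤ (∑ j, x j) / c := by linarith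
    have := (le_div_iff₀ hc).mp h2
    linarith
  refine ⟨h1, ⟨fun heq => ?_, fun hall => ?_⟩⟩
  · by_contra hne
    push_neg at hne
    obtain ⟨k, hk⟩ := hne
    have hstrict : ∑ j, Real.log (x j / c) < ∑ j, (x j / c - 1) :=
      Finset.sum_lt_sum (fun j _ => hle j) ⟨k, Finset.mem_univ k,
        Real.log_lt_sub_one_of_pos (div_pos (hx k) hc)
          (fun h => hk (by rwa [div_eq_one_iff_eq hc.ne'] at h))⟩
    rw [hlog, hsum', heq] at hstrict
    rw [mul_div_assoc, div_self hc.ne', mul_one] at hstrict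
    linarith
  · rw [Finset.sum_congr rfl fun j _ => hall j, Finset.sum_const, Finset.card_univ,
      Fintype.card_fin, nsmul_eq_mul]

end Stmt19aux

namespace Stmt19aux
section Model
variable {p : ℕ} {B : Matrix (Fin p) (Fin p) ℝ} {ωs : ℝ}

lemma hBdiag (hB : ∀ i j, B i j ≠ 0 → i < j) (i : Fin p) : B i i = 0 := by
  by_contra h
  exact lt_irrefl i (hB i i h)

lemma det_one_sub (hB : ∀ i j, B i j ≠ 0 → i < j) : (1 - B).det = 1 := by
  have htri : (1 - B).BlockTriangular id := by
    intro i j hji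
    simp only [id] at hji
    have h1 : (1 : Matrix (Fin p) (Fin p) ℝ) i j = 0 := Matrix.one_apply_ne (ne_of_gt hji)
    have h2 : B i j = 0 := by
      by_contra h
      exact absurd (hB i j h) (not_lt_of_gt hji)
    simp [Matrix.sub_apply, h1, h2]
  rw [Matrix.det_of_upperTriangular htri]
  apply Finset.prod_eq_one
  intro i _
  simp [Matrix.sub_apply, hBdiag hB i, Matrix.one_apply_eq]

lemma isUnit_det_one_sub (hB : ∀ i j, B i j ≠ 0 → i < j) : IsUnit (1 - B).det := by
  rw [det_one_sub hB]; exact isUnit_one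

lemma N_eq_one_add_NB (hB : ∀ i j, B i j ≠ 0 → i < j) :
    (1 - B)⁻¹ = 1 + (1 - B)⁻¹ * B := by
  have h := Matrix.nonsing_inv_mul (1 - B) (isUnit_det_one_sub hB)
  rw [Matrix.mul_sub, Matrix.mul_one] at h
  exact sub_eq_iff_eq_add.mp h

lemma N_eq_one_add_BN (hB : ∀ i j, B i j ≠ 0 → i < j) :
    (1 - B)⁻¹ = 1 + B * (1 - B)⁻¹ := by
  have h := Matrix.mul_nonsing_inv (1 - B) (isUnit_det_one_sub hB)
  rw [Matrix.sub_mul, Matrix.one_mul] at h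
  exact sub_eq_iff_eq_add.mp h

lemma N_low_aux (hB : ∀ i j, B i j ≠ 0 → i < j) :
    ∀ (n : ℕ) (i k : Fin p), i.1 = n → i < k → (1 - B)⁻¹ k i = 0 := by
  intro n
  induction n using Nat.strong_induction_on with
  | _ n IH =>
    intro i k hin hik
    have h := congrFun (congrFun (N_eq_one_add_NB hB) k) i
    rw [Matrix.add_apply, Matrix.one_apply_ne (ne_of_gt hik), Matrix.mul_apply, zero_add] at h
    rw [h]
    apply Finset.sum_eq_zero
    intro m _
    by_cases hm : B m i = 0
    · rw [hm, mul_zero]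
    · have hmi : m < i := hB m i hm
      rw [IH m.1 (hin ▸ hmi) m k rfl (hmi.trans hik), zero_mul]

lemma N_low (hB : ∀ i j, B i j ≠ 0 → i < j) (i k : Fin p) (hik : i < k) :
    (1 - B)⁻¹ k i = 0 := N_low_aux hB i.1 i k rfl hik

lemma N_diag (hB : ∀ i j, B i j ≠ 0 → i < j) (i : Fin p) : (1 - B)⁻¹ i i = 1 := by
  have h := congrFun (congrFun (N_eq_one_add_NB hB) i) i
  rw [Matrix.add_apply, Matrix.one_apply_eq, Matrix.mul_apply] at h
  rw [h, Finset.sum_eq_zero, add_zero]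
  intro m _
  by_cases hm : B m i = 0
  · rw [hm, mul_zero]
  · rw [N_low hB m i (hB m i hm), zero_mul]

end Model
end Stmt19aux

namespace Stmt19aux
section Model2
variable {p : ℕ} {B : Matrix (Fin p) (Fin p) ℝ} {ωs : ℝ}

lemma modelCov_eq (hB : ∀ i j, B i j ≠ 0 → i < j) :
    modelCov B (fun _ => ωs) = ((1 - B)⁻¹)ᵀ * (ωs • 1) * (1 - B)⁻¹ := by
  unfold modelCov
  congr 1
  congr 1
  · rw [show (1 - Bᵀ) = (1 - B)ᵀ by rw [Matrix.transpose_sub, Matrix.transpose_one],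
      Matrix.transpose_nonsing_inv]
  · ext i k
    by_cases h : i = k <;>
      simp [Matrix.diagonal_apply, Matrix.one_apply, Matrix.smul_apply, h]

lemma quad_model (hB : ∀ i j, B i j ≠ 0 → i < j) (v : Fin p → ℝ) :
    v ⬝ᵥ (modelCov B (fun _ => ωs)) *ᵥ v
      = ωs * (((1 - B)⁻¹ *ᵥ v) ⬝ᵥ ((1 - B)⁻¹ *ᵥ v)) := by
  rw [modelCov_eq hB, ← Matrix.mulVec_mulVec, ← Matrix.mulVec_mulVec,
    Matrix.dotProduct_mulVec, Matrix.vecMul_transpose, smul_mulVec,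
    Matrix.one_mulVec, dotProduct_smul, smul_eq_mul]

lemma sym_model (hB : ∀ i j, B i j ≠ 0 → i < j) :
    (modelCov B (fun _ => ωs))ᵀ = modelCov B (fun _ => ωs) := by
  rw [modelCov_eq hB, Matrix.transpose_mul, Matrix.transpose_mul, Matrix.transpose_transpose,
    Matrix.transpose_smul, Matrix.transpose_one, Matrix.mul_assoc]

lemma N_mulVec_ne (hB : ∀ i j, B i j ≠ 0 → i < j) {v : Fin p → ℝ} (hv : v ≠ 0) :
    (1 - B)⁻¹ *ᵥ v ≠ 0 := by
  intro h
  apply hv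
  have h2 : (1 - B) *ᵥ ((1 - B)⁻¹ *ᵥ v) = v := by
    rw [Matrix.mulVec_mulVec, Matrix.mul_nonsing_inv _ (isUnit_det_one_sub hB),
      Matrix.one_mulVec]
  rw [h, Matrix.mulVec_zero] at h2
  exact h2.symm

lemma posdef_model (hB : ∀ i j, B i j ≠ 0 → i < j) (hωs : 0 < ωs) :
    (modelCov B (fun _ => ωs)).PosDef := by
  refine Matrix.PosDef.of_dotProduct_mulVec_pos ?_ ?_
  · rw [Matrix.IsHermitian, Matrix.conjTranspose_eq_transpose_of_trivial]
    exact sym_model hB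
  · intro x hx
    rw [show star x = x by simp, quad_model hB]
    have hw : (1 - B)⁻¹ *ᵥ x ≠ 0 := N_mulVec_ne hB hx
    obtain ⟨i, hi⟩ := Function.ne_iff.mp hw
    refine mul_pos hωs ?_
    show 0 < ∑ i, ((1 - B)⁻¹ *ᵥ x) i * ((1 - B)⁻¹ *ᵥ x) i
    exact Finset.sum_pos' (fun i _ => mul_self_nonneg _)
      ⟨i, Finset.mem_univ i, mul_self_pos.mpr hi⟩

lemma det_model (hB : ∀ i j, B i j ≠ 0 → i < j) :
    (modelCov B (fun _ => ωs)).det = ωs ^ p := by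
  rw [modelCov_eq hB, Matrix.det_mul, Matrix.det_mul, Matrix.det_transpose,
    Matrix.det_nonsing_inv, det_one_sub hB, Ring.inverse_one, Matrix.det_smul, Matrix.det_one,
    Fintype.card_fin]
  ring

lemma condVar_le_model (hB : ∀ i j, B i j ≠ 0 → i < j) (hωs : 0 < ωs)
    (σ : Equiv.Perm (Fin p)) (hcons : Consistent B σ) (j : Fin p) :
    condVar (modelCov B (fun _ => ωs)) j (PRED σ j) ≤ ωs := by
  have h := condVar_le (sym_model hB) (posdef_model hB hωs)
      (not_mem_PRED_self (σ := σ) (j := j)) (fun i => (1 - B) i j)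
      (by simp [Matrix.sub_apply, hBdiag hB j, Matrix.one_apply_eq])
      (by
        intro i hij hne
        have hBij : B i j ≠ 0 := by
          intro h0
          apply hne
          simp [Matrix.sub_apply, Matrix.one_apply_ne hij, h0]
        exact mem_PRED.mpr (hcons i j hBij))
  rw [quad_model hB] at h
  have hv : (fun i => (1 - B) i j) = (1 - B) *ᵥ (Pi.single j 1 : Fin p → ℝ) := by
    rw [Matrix.mulVec_single]
    funext i
    simp
  rw [hv, Matrix.mulVec_mulVec, Matrix.nonsing_inv_mul _ (isUnit_det_one_sub hB),
    Matrix.one_mulVec] at h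
  have hdot : (Pi.single j 1 : Fin p → ℝ) ⬝ᵥ (Pi.single j 1 : Fin p → ℝ) = 1 := by
    simp [dotProduct, Pi.single_apply]
  rw [hdot, mul_one] at h
  exact h

end Model2
end Stmt19aux

namespace Stmt19aux
section Model3
variable {p : ℕ} {B : Matrix (Fin p) (Fin p) ℝ} {ωs : ℝ}

lemma consistent_of_condVar (hB : ∀ i j, B i j ≠ 0 → i < j) (hωs : 0 < ωs)
    (σ : Equiv.Perm (Fin p))
    (hall : ∀ j, condVar (modelCov B (fun _ => ωs)) j (PRED σ j) = ωs) :
    Consistent B σ := by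
  classical
  set S := modelCov B (fun _ => ωs) with hS
  have hsym : Sᵀ = S := sym_model hB
  have hpd : S.PosDef := posdef_model hB hωs
  suffices H : ∀ n : ℕ, ∀ j : Fin p, (σ.symm j : ℕ) = n → ∀ k, B k j ≠ 0 →
      σ.symm k < σ.symm j by
    intro k j hkj
    exact H (σ.symm j) j rfl k hkj
  intro n
  induction n using Nat.strong_induction_on with
  | _ n IH =>
  intro j hjn k hBkj
  by_contra hk
  have hkA : k ∉ PRED σ j := fun h => hk (mem_PRED.mp h)
  have hkj' : k ≠ j := ne_of_lt (hB k j hBkj)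
  have hanc' : ∀ i ∈ PRED σ j, ∀ m, B m i ≠ 0 → m ∈ PRED σ j := by
    intro i hi m hm
    have h1 : σ.symm m < σ.symm i :=
      IH (σ.symm i) (by rw [← hjn]; exact mem_PRED.mp hi) i rfl m hm
    exact mem_PRED.mpr (h1.trans (mem_PRED.mp hi))
  have hNsupp : ∀ (nn : ℕ) (i : Fin p), i.1 = nn → i ∈ PRED σ j → ∀ m, m ∉ PRED σ j →
      (1 - B)⁻¹ m i = 0 := by
    intro nn
    induction nn using Nat.strong_induction_on with
    | _ nn IH2 =>
    intro i hinn hi m hm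
    have h := congrFun (congrFun (N_eq_one_add_NB hB) m) i
    have hmi : m ≠ i := fun h' => hm (h' ▸ hi)
    rw [Matrix.add_apply, Matrix.one_apply_ne hmi, Matrix.mul_apply, zero_add] at h
    rw [h]
    apply Finset.sum_eq_zero
    intro l _
    by_cases hl : B l i = 0
    · rw [hl, mul_zero]
    · have hli : l < i := hB l i hl
      have hlA : l ∈ PRED σ j := hanc' i hi l hl
      rw [IH2 l.1 (hinn ▸ hli) l rfl hlA m hm, zero_mul]
  set A := PRED σ j with hA
  set r := resid S j A with hrdef
  set w := (1 - B)⁻¹ *ᵥ r with hwdef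
  have hjA : j ∉ A := not_mem_PRED_self
  have hww : w ⬝ᵥ w = 1 := by
    have h1 : r ⬝ᵥ (S *ᵥ r) = ωs := by
      rw [resid_dot hsym hpd hjA]
      exact hall j
    rw [hS, quad_model hB r] at h1
    exact mul_left_cancel₀ hωs.ne' (h1.trans (mul_one ωs).symm)
  have hwj : w j = 1 := by
    show ∑ l, (1 - B)⁻¹ j l * r l = 1
    rw [Finset.sum_eq_single j]
    · rw [N_diag hB j, hrdef, resid_self hjA, one_mul]
    · intro l _ hlj
      by_cases h0 : r l = 0
      · rw [h0, mul_zero]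
      · rcases resid_support h0 with h' | h'
        · exact absurd h' hlj
        · rw [hNsupp l.1 l rfl h' j hjA, zero_mul]
    · simp
  have hw0 : ∀ m, m ≠ j → w m = 0 := by
    have hsum : ∑ m, w m * w m = 1 := hww
    have h3 := Finset.add_sum_erase Finset.univ (fun m => w m * w m) (Finset.mem_univ j)
    simp only [hsum, hwj, one_mul] at h3
    have h2 : ∑ m ∈ Finset.univ.erase j, w m * w m = 0 := by linarith
    intro m hmj
    have h4 := (Finset.sum_eq_zero_iff_of_nonneg
      (fun i _ => mul_self_nonneg (w i))).mp h2 m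
      (Finset.mem_erase.mpr ⟨hmj, Finset.mem_univ m⟩)
    exact mul_self_eq_zero.mp h4
  have hNmj : ∀ m, m ∉ A → m ≠ j → (1 - B)⁻¹ m j = 0 := by
    intro m hmA hmj
    have h0 : w m = 0 := hw0 m hmj
    have h1 : w m = (1 - B)⁻¹ m j := by
      show ∑ l, (1 - B)⁻¹ m l * r l = _
      rw [Finset.sum_eq_single j]
      · rw [hrdef, resid_self hjA, mul_one]
      · intro l _ hlj
        by_cases hrl : r l = 0
        · rw [hrl, mul_zero]
        · rcases resid_support hrl with h' | h'
          · exact absurd h' hlj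
          · rw [hNsupp l.1 l rfl h' m hmA, zero_mul]
      · simp
    rw [← h1, h0]
  have hfin := congrFun (congrFun (N_eq_one_add_BN hB) k) j
  rw [Matrix.add_apply, Matrix.one_apply_ne hkj', Matrix.mul_apply, zero_add,
    hNmj k hkA hkj'] at hfin
  have hzero : ∑ m, B k m * (1 - B)⁻¹ m j = B k j := by
    rw [Finset.sum_eq_single j]
    · rw [N_diag hB j, mul_one]
    · intro m _ hmj
      by_cases hBm : B k m = 0
      · rw [hBm, zero_mul]
      · have hmA : m ∉ A := by
          intro hmA'
          exact hkA (hanc' m hmA' k hBm)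
        rw [hNmj m hmA hmj, mul_zero]
    · simp
  rw [hzero] at hfin
  exact hBkj hfin.symm

end Model3
end Stmt19aux

/-- If all error variances in the Gaussian linear SEM are equal (`Ω* = ω* I`), then for
every permutation `σ`, `tr(Ω*_σ) = ∑_j Var(X_j | X_{PRED_j(σ)}) ≥ tr(Ω*) = p ω*`, with
equality if and only if `σ` is consistent with the true DAG `G*`; consequently the true
DAG is the unique minimum-trace DAG. -/
theorem stmt19 {p : ℕ} (B : Matrix (Fin p) (Fin p) ℝ) (ωs : ℝ) (hωs : 0 < ωs)
    (hB : ∀ i j, B i j ≠ 0 → i < j)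
    (σ : Equiv.Perm (Fin p)) :
    (p : ℝ) * ωs ≤ ∑ j, condVar (modelCov B (fun _ => ωs)) j (PRED σ j) ∧
      (∑ j, condVar (modelCov B (fun _ => ωs)) j (PRED σ j) = (p : ℝ) * ωs ↔
        Consistent B σ) := by
  classical
  have hsym := Stmt19aux.sym_model (ωs := ωs) hB
  have hpd := Stmt19aux.posdef_model hB hωs
  have hpos : ∀ j, 0 < condVar (modelCov B fun _ => ωs) j (PRED σ j) :=
    fun j => Stmt19aux.condVar_pos hsym hpd Stmt19aux.not_mem_PRED_self
  have hprod : ∏ j, condVar (modelCov B fun _ => ωs) j (PRED σ j) = ωs ^ p := by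
    rw [Stmt19aux.prod_condVar hsym hpd σ, Stmt19aux.det_model hB]
  obtain ⟨h1, h2⟩ := Stmt19aux.amgm ωs hωs _ hpos hprod
  refine ⟨h1, ?_, ?_⟩
  · intro heq
    exact Stmt19aux.consistent_of_condVar hB hωs σ (h2.mp heq)
  · intro hcons
    refine le_antisymm ?_ h1
    calc ∑ j, condVar (modelCov B fun _ => ωs) j (PRED σ j)
        ≤ ∑ _j : Fin p, ωs :=
          Finset.sum_le_sum fun j _ => Stmt19aux.condVar_le_model hB hωs σ hcons j
      _ = (p : ℝ) * ωs := by
          rw [Finset.sum_const, Finset.card_univ, Fintype.card_fin, nsmul_eq_mul]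
end
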